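/- Let a ∈ L(H) be a nonzero projection and let u be a self-adjoint tripotent with au + ua = u and au² + u²a = 2a. Then for every t ∈ ℝ, exp(t·G(a,u)) applied to a equals (cos²t)·a + (½ sin 2t)·u + (sin²t)·(uau). -/

import Mathlib

set_option maxHeartbeats 1000000
set_option synthInstance.maxHeartbeats 400000

variable {H : Type*} [NormedAddCommGroup H] [InnerProductSpace ℂ H] [CompleteSpace H]

/-- For a projection `a` and a self-adjoint `u` in `L(H)`, `G a u` is the bounded linear
operator on `L(H)` given by `z ↦ (ua - au)z - z(ua - au)`. -/
noncomputable def G (a u : H →L[ℂ] H) : (H →L[ℂ] H) →L[ℝ] (H →L[ℂ] H) :=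
  ContinuousLinearMap.mul ℝ (H →L[ℂ] H) (u * a - a * u)
    - (ContinuousLinearMap.mul ℝ (H →L[ℂ] H)).flip (u * a - a * u)

/-- If `a ∈ L(H)` is a nonzero projection and `u` is a self-adjoint
tripotent with `au + ua = u` and `au² + u²a = 2a`, then for every `t ∈ ℝ`,
`exp(t·G(a,u)) a = (cos²t)·a + (½ sin 2t)·u + (sin²t)·(uau)`. -/
theorem exp_G_apply_projection (a u : H →L[ℂ] H)
    (hasa : IsSelfAdjoint a) (haidem : a * a = a) (ha0 : a ≠ 0)
    (husa : IsSelfAdjoint u) (hu3 : u * u * u = u)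
    (h1 : a * u + u * a = u)
    (h2 : a * (u * u) + (u * u) * a = 2 • a) :
    ∀ t : ℝ, NormedSpace.exp (t • G a u) a =
      (Real.cos t ^ 2) • a + ((1 / 2) * Real.sin (2 * t)) • u +
        (Real.sin t ^ 2) • (u * a * u) := by
  open NormedSpace in
  -- Algebraic preliminaries
  have h2' : a * (u * u) + (u * u) * a = a + a := by rw [h2, two_smul]
  have haua : a * u * a = 0 := by
    have h := congrArg (a * ·) h1
    simp only [mul_add, ← mul_assoc, haidem] at h
    rwa [add_eq_left] at h
  have hDa : G a u a = u := by
    simp only [G, ContinuousLinearMap.sub_apply, ContinuousLinearMap.mul_apply',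
      ContinuousLinearMap.flip_apply]
    linear_combination (norm := noncomm_ring) u * haidem + haidem * u - 2 * haua + h1
  have k1 : u * a * (u * u) * a = u * a := by
    linear_combination (norm := noncomm_ring) u * h2' * a + 2 * (u * haidem)
      - (u * u * u) * haidem - hu3 * a
  have k2 : a * (u * u) * (a * u) = a * u := by
    have hst := congrArg star k1
    simp only [star_mul, hasa.star_eq, husa.star_eq] at hst
    linear_combination (norm := noncomm_ring) hst
  have hDu : G a u u = 2 • (u * a * u) - 2 • a := by
    simp only [G, ContinuousLinearMap.sub_apply, ContinuousLinearMap.mul_apply',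
      ContinuousLinearMap.flip_apply, two_smul]
    linear_combination (norm := noncomm_ring) - h2'
  have hDuau : G a u (u * a * u) = -u := by
    simp only [G, ContinuousLinearMap.sub_apply, ContinuousLinearMap.mul_apply',
      ContinuousLinearMap.flip_apply]
    linear_combination (norm := noncomm_ring) 2 * (u * haua * u) - k2 - k1 - h1
  -- Analytic part
  set D : (H →L[ℂ] H) →L[ℝ] (H →L[ℂ] H) := G a u with hD
  set F : ℝ → (H →L[ℂ] H) := fun t => (Real.cos t ^ 2) • a +
      ((1 / 2) * Real.sin (2 * t)) • u + (Real.sin t ^ 2) • (u * a * u) with hF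
  have hF0 : F 0 = a := by simp [hF]
  have hFderiv : ∀ t : ℝ, HasDerivAt F (D (F t)) t := by
    intro t
    have hc : HasDerivAt (fun t : ℝ => Real.cos t ^ 2) (2 * Real.cos t ^ 1 * -Real.sin t) t :=
      (Real.hasDerivAt_cos t).pow 2
    have hs : HasDerivAt (fun t : ℝ => Real.sin t ^ 2) (2 * Real.sin t ^ 1 * Real.cos t) t :=
      (Real.hasDerivAt_sin t).pow 2
    have h2t : HasDerivAt (fun t : ℝ => (1 / 2) * Real.sin (2 * t))
        ((1 / 2) * (Real.cos (2 * t) * 2)) t :=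
      (((Real.hasDerivAt_sin (2 * t)).comp t
        (by simpa using (hasDerivAt_id t).const_mul 2))).const_mul _
    have h := ((hc.smul_const a).add (h2t.smul_const u)).add (hs.smul_const (u * a * u))
    have heq : (2 * Real.cos t ^ 1 * -Real.sin t) • a
        + ((1 / 2) * (Real.cos (2 * t) * 2)) • u
        + (2 * Real.sin t ^ 1 * Real.cos t) • (u * a * u) = D (F t) := by
      rw [hF]
      simp only [map_add, map_smul, hDa, hDu, hDuau]
      rw [Real.cos_two_mul, Real.sin_sq t, Real.sin_two_mul]
      module
    exact heq ▸ h
  have hcommc : ∀ c : ℝ, D * (c • D) = (c • D) * D := by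
    intro c
    ext z x
    simp only [ContinuousLinearMap.mul_apply, ContinuousLinearMap.smul_apply, map_smul]
  have key : ∀ t : ℝ, exp ((-t) • D) (F t) = a := by
    have hg : ∀ t : ℝ, HasDerivAt (fun t : ℝ => exp ((-t) • D) (F t)) 0 t := by
      intro t
      have hc : HasDerivAt (fun t : ℝ => exp ((-t) • D))
          ((-1 : ℝ) • (D * exp ((-t) • D))) t := by
        have h1 : HasDerivAt (fun s : ℝ => exp (s • D)) (D * exp ((-t) • D)) (-t) :=
          hasDerivAt_exp_smul_const' D (-t)
        have h2 : HasDerivAt (fun t : ℝ => -t) (-1 : ℝ) t := (hasDerivAt_id t).neg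
        exact h1.scomp t h2
      have h := hc.clm_apply (hFderiv t)
      have hcomm : D * exp ((-t) • D) = exp ((-t) • D) * D :=
        Commute.exp_right (hcommc (-t) : Commute D ((-t) • D))
      have hsum : ((-1 : ℝ) • (D * exp ((-t) • D))) (F t)
          + (exp ((-t) • D)) (D (F t)) = 0 := by
        rw [ContinuousLinearMap.smul_apply, ← ContinuousLinearMap.mul_apply, ← hcomm,
          ContinuousLinearMap.mul_apply]
        simp
      exact hsum ▸ h
    intro t
    have hconst : (fun t : ℝ => exp ((-t) • D) (F t)) t
        = (fun t : ℝ => exp ((-t) • D) (F t)) 0 :=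
      is_const_of_deriv_eq_zero (fun x => (hg x).differentiableAt)
        (fun x => (hg x).deriv) t 0
    have h0 : (-(0 : ℝ)) • D = (0 : (H →L[ℂ] H) →L[ℝ] (H →L[ℂ] H)) := by
      rw [neg_zero]; exact zero_smul ℝ D
    simp only at hconst
    rw [hF0, h0, NormedSpace.exp_zero, ContinuousLinearMap.one_apply] at hconst
    exact hconst
  intro t
  have h := congrArg (fun z => exp (t • D) z) (key t)
  have hadd : t • D + (-t) • D = (0 : (H →L[ℂ] H) →L[ℝ] (H →L[ℂ] H)) := by
    calc t • D + (-t) • D = (t + -t) • D := (add_smul t (-t) D).symm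
      _ = (0 : ℝ) • D := by rw [add_neg_cancel]
      _ = 0 := zero_smul ℝ D
  have hcm : Commute (t • D) ((-t) • D) := by
    unfold Commute SemiconjBy
    ext z x
    simp only [ContinuousLinearMap.mul_apply, ContinuousLinearMap.smul_apply, map_smul]
    rw [smul_comm]
  rw [← ContinuousLinearMap.mul_apply, ← NormedSpace.exp_add_of_commute_of_mem_ball (𝕂 := ℝ) hcm
    ((NormedSpace.expSeries_radius_eq_top ℝ ((H →L[ℂ] H) →L[ℝ] (H →L[ℂ] H))).symm ▸ edist_lt_top _ _)
    ((NormedSpace.expSeries_radius_eq_top ℝ ((H →L[ℂ] H) →L[ℝ] (H →L[ℂ] H))).symm ▸ edist_lt_top _ _), hadd,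
    NormedSpace.exp_zero, ContinuousLinearMap.one_apply] at h
  rw [← h]
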